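/- Let k ≥ 5 be odd and let A ∈ M(2n−1,ℝ) be nilpotent with A^k = 0 and A^{k−1} ≠ 0 (so that 𝔤_A = ℝe₀ ⋉_A ℝ^{2n−1} is a k-step nilpotent almost abelian Lie algebra). If dim 𝔤_A = 2n ≤ k + 3, then 𝔤_A admits a symplectic structure. -/

import Mathlib

open Matrix Module

noncomputable section

/-- The `n × n` real nilpotent Jordan block `𝒥ₙ`, with `1`s on the subdiagonal
and `0`s elsewhere. -/
def jordanBlock (n : ℕ) : Matrix (Fin n) (Fin n) ℝ :=
  Matrix.of fun i j => if (i : ℕ) = (j : ℕ) + 1 then 1 else 0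

/-- Two square real matrices with the same index type are conjugate:
`B = P * A * P⁻¹` for some invertible `P`. -/
def MatConj {ι : Type*} [Fintype ι] [DecidableEq ι] (A B : Matrix ι ι ℝ) : Prop :=
  ∃ P : Matrix ι ι ℝ, IsUnit P ∧ B = P * A * P⁻¹

/-- Conjugacy of square real matrices indexed by possibly different (equipotent)
index types: after relabelling the rows/columns of `A` by a bijection, the two
matrices are conjugate. -/
def MatConj' {ι κ : Type*} [Fintype ι] [DecidableEq ι] [Fintype κ] [DecidableEq κ]
    (A : Matrix ι ι ℝ) (B : Matrix κ κ ℝ) : Prop :=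
  ∃ e : ι ≃ κ, MatConj (Matrix.reindex e e A) B

/-- The Lie bracket of the almost abelian Lie algebra `𝔤_A = ℝe₀ ⋉_A ℝ^ι`, on the
underlying vector space `ℝ × (ι → ℝ)`:  `[(t,v),(s,w)] = (0, t • A w − s • A v)`. -/
def aaBracket {ι : Type*} [Fintype ι] (A : Matrix ι ι ℝ) :
    ℝ × (ι → ℝ) → ℝ × (ι → ℝ) → ℝ × (ι → ℝ) :=
  fun x y => (0, x.1 • A.mulVec y.2 - y.1 • A.mulVec x.2)

/-- The almost abelian Lie algebra `𝔤_A` admits a complex structure: a linear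
endomorphism `j` with `j² = -id` whose Nijenhuis tensor vanishes. -/
def HasComplexStructure {ι : Type*} [Fintype ι] (A : Matrix ι ι ℝ) : Prop :=
  ∃ j : (ℝ × (ι → ℝ)) →ₗ[ℝ] ℝ × (ι → ℝ),
    (∀ x, j (j x) = -x) ∧
    (∀ x y, aaBracket A x y + j (aaBracket A (j x) y + aaBracket A x (j y))
        - aaBracket A (j x) (j y) = 0)

/-- The almost abelian Lie algebra `𝔤_A` admits a symplectic structure: a
non-degenerate alternating bilinear form which is closed. -/
def HasSymplecticStructure {ι : Type*} [Fintype ι] (A : Matrix ι ι ℝ) : Prop :=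
  ∃ ω : (ℝ × (ι → ℝ)) →ₗ[ℝ] (ℝ × (ι → ℝ)) →ₗ[ℝ] ℝ,
    (∀ x, ω x x = 0) ∧
    (∀ x, (∀ y, ω x y = 0) → x = 0) ∧
    (∀ x y z, ω (aaBracket A x y) z + ω (aaBracket A y z) x + ω (aaBracket A z x) y = 0)


open Matrix Module Finset

noncomputable section

variable {d : ℕ}

abbrev V (d : ℕ) := Fin d → ℝ

/-- coordinate functionals along the flag -/
def dl (f : V d →ₗ[ℝ] V d) (φ : V d →ₗ[ℝ] ℝ) (m : ℕ) : V d →ₗ[ℝ] ℝ := φ ∘ₗ (f ^ m)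

lemma dl_f (f : V d →ₗ[ℝ] V d) (φ : V d →ₗ[ℝ] ℝ) (m : ℕ) (x : V d) :
    dl f φ m (f x) = dl f φ (m + 1) x := by
  simp [dl, pow_succ, Module.End.mul_apply]

lemma dl_zero_of_ge (f : V d →ₗ[ℝ] V d) (φ : V d →ₗ[ℝ] ℝ) {k m : ℕ}
    (hfk : ∀ x, (f ^ k) x = 0) (h : k ≤ m) (x : V d) : dl f φ m x = 0 := by
  have : f ^ m = f ^ (m - k) * f ^ k := by rw [← pow_add]; congr 1; omega
  simp [dl, this, Module.End.mul_apply, hfk, map_zero]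

/-- the candidate symplectic form on the abelian ideal -/
def sig (k : ℕ) (f : V d →ₗ[ℝ] V d) (φ ψ₁ ψ₂ : V d →ₗ[ℝ] ℝ) (x y : V d) : ℝ :=
  (∑ i ∈ Finset.range (k - 1), (-1 : ℝ) ^ i * dl f φ (k - 1 - i) x * dl f φ (i + 1) y)
    + (ψ₁ x * ψ₂ y - ψ₂ x * ψ₁ y)

section sigprops

variable (k : ℕ) (f : V d →ₗ[ℝ] V d) (φ ψ₁ ψ₂ : V d →ₗ[ℝ] ℝ)

lemma sig_add_left (x x' y : V d) :
    sig k f φ ψ₁ ψ₂ (x + x') y = sig k f φ ψ₁ ψ₂ x y + sig k f φ ψ₁ ψ₂ x' y := by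
  simp only [sig, map_add, add_mul, mul_add, Finset.sum_add_distrib]; ring

lemma sig_smul_left (r : ℝ) (x y : V d) :
    sig k f φ ψ₁ ψ₂ (r • x) y = r * sig k f φ ψ₁ ψ₂ x y := by
  simp only [sig, LinearMap.map_smul, smul_eq_mul, Finset.mul_sum, mul_add, mul_sub]
  congr 1; · exact Finset.sum_congr rfl (fun i _ => by ring)
  · ring

lemma sig_add_right (x y y' : V d) :
    sig k f φ ψ₁ ψ₂ x (y + y') = sig k f φ ψ₁ ψ₂ x y + sig k f φ ψ₁ ψ₂ x y' := by
  simp only [sig, map_add, add_mul, mul_add, Finset.sum_add_distrib]; ring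

lemma sig_smul_right (r : ℝ) (x y : V d) :
    sig k f φ ψ₁ ψ₂ x (r • y) = r * sig k f φ ψ₁ ψ₂ x y := by
  simp only [sig, LinearMap.map_smul, smul_eq_mul, Finset.mul_sum, mul_add, mul_sub]
  congr 1; · exact Finset.sum_congr rfl (fun i _ => by ring)
  · ring

end sigprops

lemma neg_one_pow_sub {n j : ℕ} (hn : Odd n) (hj : j ≤ n) :
    (-1 : ℝ) ^ (n - j) = -(-1 : ℝ) ^ j := by
  have h : (n - j) + j = n := by omega
  have := pow_add (-1 : ℝ) (n - j) j
  rw [h, hn.neg_one_pow] at this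
  have hsq : (-1 : ℝ) ^ j * (-1 : ℝ) ^ j = 1 := by
    rw [← pow_add]; exact Even.neg_one_pow ⟨j, rfl⟩
  calc (-1 : ℝ) ^ (n - j) = (-1 : ℝ) ^ (n - j) * ((-1:ℝ)^j * (-1:ℝ)^j) := by rw [hsq, mul_one]
    _ = ((-1 : ℝ) ^ (n - j) * (-1:ℝ)^j) * (-1:ℝ)^j := by ring
    _ = -(-1:ℝ)^j := by rw [← this]; ring

section sigkey

variable {k : ℕ} (f : V d →ₗ[ℝ] V d) (φ ψ₁ ψ₂ : V d →ₗ[ℝ] ℝ)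

lemma sig_skew (hk5 : 5 ≤ k) (hkodd : Odd k) (x y : V d) :
    sig k f φ ψ₁ ψ₂ y x = - sig k f φ ψ₁ ψ₂ x y := by
  unfold sig
  have hrefl := Finset.sum_range_reflect
    (fun i => (-1 : ℝ) ^ i * dl f φ (k - 1 - i) y * dl f φ (i + 1) x) (k - 1)
  rw [← hrefl]
  have hc : ∀ i ∈ Finset.range (k - 1),
      (-1:ℝ) ^ (k - 1 - 1 - i) * dl f φ (k - 1 - (k - 1 - 1 - i)) y * dl f φ ((k - 1 - 1 - i) + 1) x
      = -((-1:ℝ) ^ i * dl f φ (k - 1 - i) x * dl f φ (i + 1) y) := by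
    intro i hi
    rw [Finset.mem_range] at hi
    have h1 : k - 1 - 1 - i = k - 2 - i := by omega
    have h2 : k - 1 - (k - 2 - i) = i + 1 := by omega
    have h3 : (k - 2 - i) + 1 = k - 1 - i := by omega
    have h4 : (-1:ℝ) ^ (k - 2 - i) = -(-1:ℝ)^i := by
      apply neg_one_pow_sub (n := k - 2)
      · obtain ⟨m, hm⟩ := hkodd; exact ⟨m - 1, by omega⟩
      · omega
    rw [h1, h2, h3, h4]; ring
  rw [Finset.sum_congr rfl hc]
  rw [Finset.sum_neg_distrib]
  ring

lemma sig_inv (hk5 : 5 ≤ k) (hfk : ∀ x, (f ^ k) x = 0)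
    (hψ₁f : ∀ x, ψ₁ (f x) = 0) {c : ℝ} (hψ₂f : ∀ x, ψ₂ (f x) = c * ψ₁ x) (x y : V d) :
    sig k f φ ψ₁ ψ₂ (f x) y + sig k f φ ψ₁ ψ₂ x (f y) = 0 := by
  obtain ⟨m, rfl⟩ : ∃ m, k = m + 2 := ⟨k - 2, by omega⟩
  unfold sig
  have hr : m + 2 - 1 = m + 1 := rfl
  rw [hr, hψ₁f, hψ₁f, hψ₂f, hψ₂f]
  have hF : ∀ i ∈ Finset.range (m+1),
      (-1:ℝ)^i * dl f φ (m+1-i) (f x) * dl f φ (i+1) y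
      = (-1:ℝ)^i * dl f φ (m+2-i) x * dl f φ (i+1) y := by
    intro i hi; rw [Finset.mem_range] at hi
    rw [dl_f]
    have : m + 1 - i + 1 = m + 2 - i := by omega
    rw [this]
  have hG : ∀ i ∈ Finset.range (m+1),
      (-1:ℝ)^i * dl f φ (m+1-i) x * dl f φ (i+1) (f y)
      = (-1:ℝ)^i * dl f φ (m+1-i) x * dl f φ (i+2) y := by
    intro i hi; rw [dl_f]
  have key : (∑ i ∈ Finset.range (m+1), (-1:ℝ)^i * dl f φ (m+1-i) (f x) * dl f φ (i+1) y)
      + (∑ i ∈ Finset.range (m+1), (-1:ℝ)^i * dl f φ (m+1-i) x * dl f φ (i+1) (f y)) = 0 := by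
    rw [Finset.sum_congr rfl hF, Finset.sum_congr rfl hG,
      Finset.sum_range_succ', Finset.sum_range_succ]
    have z1 : dl f φ (m+2-0) x = 0 := dl_zero_of_ge f φ hfk (by omega) x
    have z2 : dl f φ (m+2) y = 0 := dl_zero_of_ge f φ hfk (by omega) y
    rw [z1, z2]
    have hz : ∀ i ∈ Finset.range m,
        ((-1:ℝ)^(i+1) * dl f φ (m+2-(i+1)) x * dl f φ ((i+1)+1) y)
        + ((-1:ℝ)^i * dl f φ (m+1-i) x * dl f φ (i+2) y) = 0 := by
      intro i hi
      have h1 : m + 2 - (i+1) = m + 1 - i := by omega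
      rw [h1, pow_succ]; ring
    have := Finset.sum_add_distrib (s := Finset.range m)
      (f := fun i => (-1:ℝ)^(i+1) * dl f φ (m+2-(i+1)) x * dl f φ ((i+1)+1) y)
      (g := fun i => (-1:ℝ)^i * dl f φ (m+1-i) x * dl f φ (i+2) y)
    rw [Finset.sum_eq_zero hz] at this
    linear_combination -this
  linear_combination key

lemma sig_fsymm (hk5 : 5 ≤ k) (hkodd : Odd k) (hfk : ∀ x, (f ^ k) x = 0)
    (hψ₁f : ∀ x, ψ₁ (f x) = 0) {c : ℝ} (hψ₂f : ∀ x, ψ₂ (f x) = c * ψ₁ x) (x y : V d) :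
    sig k f φ ψ₁ ψ₂ (f x) y = sig k f φ ψ₁ ψ₂ (f y) x := by
  have h1 := sig_inv f φ ψ₁ ψ₂ hk5 hfk hψ₁f hψ₂f x y
  have h2 := sig_skew f φ ψ₁ ψ₂ hk5 hkodd (f y) x
  linarith [h1, h2]

end sigkey

section engine

variable {k : ℕ} (f : V d →ₗ[ℝ] V d) (φ ψ₁ ψ₂ : V d →ₗ[ℝ] ℝ)

lemma dl_zero' (x : V d) : dl f φ 0 x = φ x := by simp [dl]

lemma sig_sub_left (x x' y : V d) :
    sig k f φ ψ₁ ψ₂ (x - x') y = sig k f φ ψ₁ ψ₂ x y - sig k f φ ψ₁ ψ₂ x' y := by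
  have h1 := sig_add_left k f φ ψ₁ ψ₂ x (-x') y
  have h2 := sig_smul_left k f φ ψ₁ ψ₂ (-1) x' y
  simp only [neg_one_smul] at h2
  rw [sub_eq_add_neg, h1, h2]; ring

lemma sig_zero_right (x : V d) : sig k f φ ψ₁ ψ₂ x 0 = 0 := by
  simp [sig]

lemma sig_self (hk5 : 5 ≤ k) (hkodd : Odd k) (x : V d) : sig k f φ ψ₁ ψ₂ x x = 0 := by
  have := sig_skew f φ ψ₁ ψ₂ hk5 hkodd x x
  linarith

lemma engine {k : ℕ} (hk5 : 5 ≤ k) (hkodd : Odd k)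
    (A : Matrix (Fin d) (Fin d) ℝ)
    (f : V d →ₗ[ℝ] V d) (hfA : ∀ x, f x = A.mulVec x)
    (hfk : ∀ x, (f ^ k) x = 0)
    (φ ψ₁ ψ₂ : V d →ₗ[ℝ] ℝ) (c : ℝ)
    (hψ₁f : ∀ x, ψ₁ (f x) = 0)
    (hψ₂f : ∀ x, ψ₂ (f x) = c * ψ₁ x)
    (hsurj : ∀ j, j < k → ∃ g : V d,
      (∀ m, m < k → dl f φ m g = if m + j = k - 1 then 1 else 0) ∧ ψ₁ g = 0 ∧ ψ₂ g = 0)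
    (hψtest : (∀ v, ψ₁ v = 0 ∧ ψ₂ v = 0) ∨
      (∃ p q : V d, (∀ m, m < k → dl f φ m p = 0) ∧ (∀ m, m < k → dl f φ m q = 0) ∧
        ψ₁ p = 1 ∧ ψ₂ p = 0 ∧ ψ₁ q = 0 ∧ ψ₂ q = 1))
    (hnd : ∀ v : V d, (∀ m, m < k → dl f φ m v = 0) → ψ₁ v = 0 → ψ₂ v = 0 → v = 0) :
    HasSymplecticStructure A := by
  set σ := sig k f φ ψ₁ ψ₂ with hσ
  refine ⟨LinearMap.mk₂ ℝ
      (fun x y : ℝ × V d => x.1 * φ y.2 - y.1 * φ x.2 + σ x.2 y.2)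
      ?_ ?_ ?_ ?_, ?_, ?_, ?_⟩
  · intro x x' y
    simp only [Prod.fst_add, Prod.snd_add, map_add, hσ, sig_add_left]; ring
  · intro r x y
    simp only [Prod.smul_fst, Prod.smul_snd, LinearMap.map_smul, smul_eq_mul, hσ, sig_smul_left]; ring
  · intro x y y'
    simp only [Prod.fst_add, Prod.snd_add, map_add, hσ, sig_add_right]; ring
  · intro r x y
    simp only [Prod.smul_fst, Prod.smul_snd, LinearMap.map_smul, smul_eq_mul, hσ, sig_smul_right]; ring
  · intro x
    simp only [LinearMap.mk₂_apply]
    rw [hσ, sig_self f φ ψ₁ ψ₂ hk5 hkodd]; ring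
  · -- nondegeneracy
    intro x hx
    simp only [LinearMap.mk₂_apply] at hx
    have h0 : φ x.2 = 0 := by
      have := hx (1, 0)
      simp only [map_zero, hσ, sig_zero_right] at this
      linarith
    have hgk := hsurj (k - 1) (by omega)
    obtain ⟨g, hg, hg1, hg2⟩ := hgk
    have ht : x.1 = 0 := by
      have hxg := hx (0, g)
      have hφg : φ g = 1 := by
        have := hg 0 (by omega)
        rw [dl_zero'] at this
        simpa using this
      have hsg : σ x.2 g = 0 := by
        rw [hσ]; unfold sig
        rw [hg1, hg2]
        have : ∀ i ∈ Finset.range (k-1), (-1:ℝ)^i * dl f φ (k-1-i) x.2 * dl f φ (i+1) g = 0 := by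
          intro i hi
          rw [Finset.mem_range] at hi
          have := hg (i+1) (by omega)
          rw [if_neg (by omega)] at this
          rw [this]; ring
        rw [Finset.sum_eq_zero this]; ring
      rw [hφg, hsg] at hxg
      norm_num at hxg
      exact hxg
    have hγ : ∀ m, m < k → dl f φ m x.2 = 0 := by
      intro m hm
      rcases Nat.eq_zero_or_pos m with h | h
      · rw [h, dl_zero']; exact h0
      obtain ⟨g', hg', hg'1, hg'2⟩ := hsurj (m - 1) (by omega)
      have hxg := hx (0, g')
      have hφg' : φ g' = 0 := by
        have := hg' 0 (by omega)
        rw [dl_zero'] at this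
        rw [this, if_neg (by omega)]
      have hsg : σ x.2 g' = (-1:ℝ)^(k-1-m) * dl f φ m x.2 := by
        rw [hσ]; unfold sig
        rw [hg'1, hg'2]
        have hsum : ∑ i ∈ Finset.range (k-1), (-1:ℝ)^i * dl f φ (k-1-i) x.2 * dl f φ (i+1) g'
            = (-1:ℝ)^(k-1-m) * dl f φ m x.2 := by
          rw [Finset.sum_eq_single (k-1-m)]
          · have := hg' (k-1-m+1) (by omega)
            rw [if_pos (by omega)] at this
            rw [this]
            have : k - 1 - (k-1-m) = m := by omega
            rw [this]; ring
          · intro i hi hne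
            rw [Finset.mem_range] at hi
            have := hg' (i+1) (by omega)
            rw [if_neg (by omega)] at this
            rw [this]; ring
          · intro hmem
            exfalso; exact hmem (Finset.mem_range.mpr (by omega))
        rw [hsum]; ring
      rw [hφg', hsg, ht] at hxg
      norm_num at hxg
      exact hxg
    have hψv : ψ₁ x.2 = 0 ∧ ψ₂ x.2 = 0 := by
      rcases hψtest with hψ | ⟨p, q, hp, hq, hp1, hp2, hq1, hq2⟩
      · exact hψ x.2
      constructor
      · have hxq := hx (0, q)
        have hφq : φ q = 0 := by
          have := hq 0 (by omega); rwa [dl_zero'] at this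
        have hsq : σ x.2 q = ψ₁ x.2 := by
          rw [hσ]; unfold sig
          rw [hq1, hq2]
          have : ∀ i ∈ Finset.range (k-1), (-1:ℝ)^i * dl f φ (k-1-i) x.2 * dl f φ (i+1) q = 0 := by
            intro i hi
            rw [Finset.mem_range] at hi
            rw [hq (i+1) (by omega)]; ring
          rw [Finset.sum_eq_zero this]; ring
        rw [hφq, hsq, ht] at hxq
        norm_num at hxq
        exact hxq
      · have hxp := hx (0, p)
        have hφp : φ p = 0 := by
          have := hp 0 (by omega); rwa [dl_zero'] at this
        have hsp : σ x.2 p = -ψ₂ x.2 := by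
          rw [hσ]; unfold sig
          rw [hp1, hp2]
          have : ∀ i ∈ Finset.range (k-1), (-1:ℝ)^i * dl f φ (k-1-i) x.2 * dl f φ (i+1) p = 0 := by
            intro i hi
            rw [Finset.mem_range] at hi
            rw [hp (i+1) (by omega)]; ring
          rw [Finset.sum_eq_zero this]; ring
        rw [hφp, hsp, ht] at hxp
        norm_num at hxp
        exact hxp
    have hv : x.2 = 0 := hnd x.2 hγ hψv.1 hψv.2
    exact Prod.ext ht hv
  · -- closedness
    intro x y z
    simp only [LinearMap.mk₂_apply, aaBracket]
    have hmv : ∀ w : V d, A.mulVec w = f w := fun w => (hfA w).symm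
    simp only [hmv]
    have hexp : ∀ (a b : ℝ) (u v w : V d),
        σ (a • f u - b • f v) w = a * σ (f u) w - b * σ (f v) w := by
      intro a b u v w
      rw [hσ, sig_sub_left, sig_smul_left, sig_smul_left]
    simp only [map_sub, LinearMap.map_smul, smul_eq_mul, hexp]
    have e1 : σ (f x.2) z.2 = σ (f z.2) x.2 :=
      sig_fsymm f φ ψ₁ ψ₂ hk5 hkodd hfk hψ₁f hψ₂f x.2 z.2
    have e2 : σ (f y.2) x.2 = σ (f x.2) y.2 :=
      sig_fsymm f φ ψ₁ ψ₂ hk5 hkodd hfk hψ₁f hψ₂f y.2 x.2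
    have e3 : σ (f z.2) y.2 = σ (f y.2) z.2 :=
      sig_fsymm f φ ψ₁ ψ₂ hk5 hkodd hfk hψ₁f hψ₂f z.2 y.2
    rw [e1, e2, e3]; ring

end engine

section build

variable {d : ℕ}

lemma pow_apply_zero_of_ge (f : V d →ₗ[ℝ] V d) {k : ℕ} (hfk : ∀ x, (f ^ k) x = 0)
    {a : ℕ} (ha : k ≤ a) (x : V d) : (f ^ a) x = 0 := by
  have h : f ^ a = f ^ (a - k) * f ^ k := by rw [← pow_add]; congr 1; omega
  rw [h, Module.End.mul_apply, hfk, map_zero]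

lemma chainLI (f : V d →ₗ[ℝ] V d) (w : V d) (m : ℕ) (h : (f ^ m) w ≠ 0)
    (h2 : (f ^ (m + 1)) w = 0) :
    LinearIndependent ℝ (fun i : Fin (m + 1) => (f ^ (i : ℕ)) w) := by
  have hzero : ∀ a, m + 1 ≤ a → (f ^ a) w = 0 := by
    intro a ha
    have hh : f ^ a = f ^ (a - (m + 1)) * f ^ (m + 1) := by rw [← pow_add]; congr 1; omega
    rw [hh, Module.End.mul_apply, h2, map_zero]
  rw [Fintype.linearIndependent_iff]
  intro g hg
  suffices H : ∀ j : ℕ, ∀ i : Fin (m + 1), (i : ℕ) = j → g i = 0 by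
    intro i; exact H i i rfl
  intro j
  induction j using Nat.strong_induction_on with
  | _ j IH =>
    intro i hij
    have hjm : j ≤ m := by have := i.isLt; omega
    have happ := congrArg (f ^ (m - j)) hg
    rw [map_zero, map_sum] at happ
    have hterm : ∀ i' : Fin (m + 1),
        (f ^ (m - j)) (g i' • (f ^ (i' : ℕ)) w) = g i' • (f ^ (m - j + (i' : ℕ))) w := by
      intro i'
      rw [LinearMap.map_smul, ← Module.End.mul_apply, ← pow_add]
    rw [Finset.sum_congr rfl (fun i' _ => hterm i')] at happ
    rw [Finset.sum_eq_single i] at happ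
    · have : m - j + (i : ℕ) = m := by omega
      rw [this] at happ
      exact (smul_eq_zero.mp happ).resolve_right h
    · intro i' _ hne
      rcases Nat.lt_or_ge (i' : ℕ) j with hlt | hge
      · rw [IH (i' : ℕ) (by omega) i' rfl, zero_smul]
      · have : (i' : ℕ) ≠ j := fun hc => hne (Fin.ext (by omega))
        rw [hzero (m - j + (i' : ℕ)) (by omega), smul_zero]
    · intro hc; exact absurd (Finset.mem_univ i) hc

lemma exists_dual {K : ℕ} (e : Fin K → V d) (he : LinearIndependent ℝ e) (j₀ : Fin K) :
    ∃ φ : V d →ₗ[ℝ] ℝ, ∀ j, φ (e j) = if j = j₀ then 1 else 0 := by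
  have hs : LinearIndepOn ℝ id (Set.range e) := (linearIndepOn_id_range_iff he.injective).mpr he
  let b := Basis.extend hs
  have hmem : ∀ j, e j ∈ hs.extend (Set.subset_univ (Set.range e)) := fun j =>
    (hs.subset_extend _) ⟨j, rfl⟩
  refine ⟨b.coord ⟨e j₀, hmem j₀⟩, fun j => ?_⟩
  have hbj : b ⟨e j, hmem j⟩ = e j := Basis.extend_apply_self hs ⟨e j, hmem j⟩
  rw [← hbj, Basis.coord_apply, Basis.repr_self, Finsupp.single_apply]
  by_cases hj : j = j₀
  · subst hj; rw [if_pos rfl, if_pos rfl]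
  · rw [if_neg (fun hc => hj (he.injective (Subtype.mk.injEq _ _ _ _ ▸ hc))), if_neg hj]

lemma toLin'_pow (A : Matrix (Fin d) (Fin d) ℝ) (m : ℕ) :
    Matrix.toLin' (A ^ m) = (Matrix.toLin' A) ^ m := by
  induction m with
  | zero => rw [pow_zero, pow_zero, Matrix.toLin'_one]; rfl
  | succ n ih =>
    rw [pow_succ, pow_succ, Matrix.toLin'_mul, ih]
    rfl

end build

section case1

lemma case1 {d : ℕ} (hk5 : 5 ≤ d) (hkodd : Odd d)
    (A : Matrix (Fin d) (Fin d) ℝ) (hAk : A ^ d = 0) (hAk' : A ^ (d - 1) ≠ 0) :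
    HasSymplecticStructure A := by
  set f := Matrix.toLin' A with hf
  have hfA : ∀ x, f x = A.mulVec x := fun x => Matrix.toLin'_apply A x
  have hfk : ∀ x, (f ^ d) x = 0 := by
    intro x; rw [← toLin'_pow, hAk]; simp
  obtain ⟨v₀, hv₀⟩ : ∃ v, (f ^ (d - 1)) v ≠ 0 := by
    by_contra hc; push_neg at hc
    apply hAk'
    apply Matrix.toLin'.injective
    rw [map_zero]
    apply LinearMap.ext
    intro v
    rw [toLin'_pow]
    simpa using hc v
  have hd1 : d - 1 + 1 = d := by omega
  have hstep : (f ^ (d - 1 + 1)) v₀ = 0 := by rw [hd1]; exact hfk v₀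
  have hchain := chainLI f v₀ (d - 1) hv₀ hstep
  rw [hd1] at hchain
  haveI : Nonempty (Fin d) := ⟨⟨0, by omega⟩⟩
  have hcard : Fintype.card (Fin d) = finrank ℝ (V d) := by
    simp [Module.finrank_fintype_fun_eq_card]
  let b := basisOfLinearIndependentOfCardEqFinrank hchain hcard
  have hb : ∀ i : Fin d, b i = (f ^ (i : ℕ)) v₀ := fun i => by
    rw [show b = basisOfLinearIndependentOfCardEqFinrank hchain hcard from rfl,
      coe_basisOfLinearIndependentOfCardEqFinrank]
  set φ := b.coord ⟨d - 1, by omega⟩ with hφ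
  have heval : ∀ l : ℕ, φ ((f ^ l) v₀) = if l = d - 1 then 1 else 0 := by
    intro l
    by_cases hl : l < d
    · have h1 : (f ^ l) v₀ = b ⟨l, hl⟩ := (hb ⟨l, hl⟩).symm
      rw [h1, hφ, Basis.coord_apply, Basis.repr_self, Finsupp.single_apply]
      by_cases h : l = d - 1
      · rw [if_pos (Fin.ext (by simpa using h)), if_pos h]
      · have hne : (⟨l, hl⟩ : Fin d) ≠ ⟨d - 1, by omega⟩ := by
          intro hc; exact h (congrArg Fin.val hc)
        rw [if_neg hne, if_neg h]
    · rw [pow_apply_zero_of_ge f hfk (by omega), map_zero, if_neg (by omega)]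
  have hdl : ∀ m j : ℕ, dl f φ m ((f ^ j) v₀) = if m + j = d - 1 then 1 else 0 := by
    intro m j
    have h1 : dl f φ m ((f ^ j) v₀) = φ ((f ^ (m + j)) v₀) := by
      simp only [dl, LinearMap.comp_apply]
      rw [← Module.End.mul_apply, ← pow_add]
    rw [h1, heval]
  have hrep : ∀ (v : V d) (m : ℕ) (hm : m < d),
      φ ((f ^ m) v) = b.repr v ⟨d - 1 - m, by omega⟩ := by
    intro v m hm
    conv_lhs => rw [← Basis.sum_repr b v]
    rw [map_sum, map_sum]
    have hterm : ∀ i : Fin d,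
        φ ((f ^ m) (b.repr v i • b i)) = b.repr v i * (if m + (i : ℕ) = d - 1 then 1 else 0) := by
      intro i
      rw [LinearMap.map_smul, LinearMap.map_smul, smul_eq_mul]
      congr 1
      rw [hb i, ← Module.End.mul_apply, ← pow_add, heval]
    rw [Finset.sum_congr rfl (fun i _ => hterm i)]
    rw [Finset.sum_eq_single (⟨d - 1 - m, by omega⟩ : Fin d)]
    · rw [if_pos (by simp; omega), mul_one]
    · intro i _ hne
      rw [if_neg (fun hc => hne (Fin.ext (by simp; omega))), mul_zero]
    · intro h; exact absurd (Finset.mem_univ _) h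
  apply engine hk5 hkodd A f hfA hfk φ 0 0 0
  · intro x; simp
  · intro x; simp
  · intro j hj
    exact ⟨(f ^ j) v₀, fun m hm => hdl m j, by simp, by simp⟩
  · left; intro v; simp
  · intro v hv _ _
    apply (Basis.ext_elem_iff b).mpr
    intro i
    rw [map_zero, Finsupp.coe_zero, Pi.zero_apply]
    have h1 : φ ((f ^ (d - 1 - (i : ℕ))) v) = 0 := hv (d - 1 - (i : ℕ)) (by omega)
    rw [hrep v (d - 1 - (i : ℕ)) (by omega)] at h1
    have h2 : (⟨d - 1 - (d - 1 - (i : ℕ)), by omega⟩ : Fin d) = i := Fin.ext (by simp; omega)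
    rwa [h2] at h1

end case1

section case2

set_option maxHeartbeats 2000000 in
lemma case2 {D k : ℕ} (hk5 : 5 ≤ k) (hkodd : Odd k) (hD : D = k + 2)
    (A : Matrix (Fin D) (Fin D) ℝ) (hAk : A ^ k = 0) (hAk' : A ^ (k - 1) ≠ 0) :
    HasSymplecticStructure A := by
  subst hD
  set f := Matrix.toLin' A with hf
  have hfA : ∀ x, f x = A.mulVec x := fun x => Matrix.toLin'_apply A x
  have hfk : ∀ x, (f ^ k) x = 0 := by
    intro x; rw [← toLin'_pow, hAk]; simp
  obtain ⟨v₀, hv₀⟩ : ∃ v, (f ^ (k - 1)) v ≠ 0 := by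
    by_contra hc; push_neg at hc
    apply hAk'
    apply Matrix.toLin'.injective
    rw [map_zero]
    apply LinearMap.ext
    intro v
    rw [toLin'_pow]
    simpa using hc v
  have hk1 : k - 1 + 1 = k := by omega
  have hstep : (f ^ (k - 1 + 1)) v₀ = 0 := by rw [hk1]; exact hfk v₀
  have hchain0 := chainLI f v₀ (k - 1) hv₀ hstep
  rw [hk1] at hchain0
  set e : ℕ → V (k + 2) := fun m => (f ^ m) v₀ with he
  have hchain : LinearIndependent ℝ (fun i : Fin k => e (i : ℕ)) := hchain0
  obtain ⟨φ₀, hφ₀⟩ := exists_dual _ hchain ⟨k - 1, by omega⟩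
  have hek : ∀ l, k ≤ l → e l = 0 := fun l hl => pow_apply_zero_of_ge f hfk hl v₀
  have hfe : ∀ m, f (e m) = e (m + 1) := by
    intro m; rw [he]
    show f ((f ^ m) v₀) = (f ^ (m + 1)) v₀
    rw [pow_succ', Module.End.mul_apply]
  have hee : ∀ a b : ℕ, (f ^ a) (e b) = e (a + b) := by
    intro a b; rw [he]
    show (f ^ a) ((f ^ b) v₀) = (f ^ (a + b)) v₀
    rw [pow_add, Module.End.mul_apply]
  have hφ₀e : ∀ l : ℕ, φ₀ (e l) = if l = k - 1 then 1 else 0 := by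
    intro l
    by_cases hl : l < k
    · have h1 : e l = (fun i : Fin k => e (i : ℕ)) ⟨l, hl⟩ := rfl
      rw [h1, hφ₀]
      by_cases h : l = k - 1
      · rw [if_pos (Fin.ext (by simpa using h)), if_pos h]
      · have hne : (⟨l, hl⟩ : Fin k) ≠ ⟨k - 1, by omega⟩ := fun hc => h (congrArg Fin.val hc)
        rw [if_neg hne, if_neg h]
    · rw [hek l (by omega), map_zero, if_neg (by omega)]
  -- the projection onto the cyclic subspace
  set π : V (k + 2) →ₗ[ℝ] V (k + 2) :=
    ∑ i ∈ Finset.range k, (dl f φ₀ (k - 1 - i)).smulRight (e i) with hπ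
  have hπapp : ∀ x, π x = ∑ i ∈ Finset.range k, φ₀ ((f ^ (k - 1 - i)) x) • e i := by
    intro x
    rw [hπ, LinearMap.sum_apply]
    exact Finset.sum_congr rfl fun i _ => by rw [LinearMap.smulRight_apply]; rfl
  have hπe : ∀ j, j < k → π (e j) = e j := by
    intro j hj
    rw [hπapp]
    have hterm : ∀ i ∈ Finset.range k,
        φ₀ ((f ^ (k - 1 - i)) (e j)) • e i = if i = j then e j else 0 := by
      intro i hi
      rw [Finset.mem_range] at hi
      rw [hee, hφ₀e]
      by_cases hij : i = j
      · rw [if_pos (by omega), if_pos hij, one_smul, hij]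
      · rw [if_neg (by omega), if_neg hij, zero_smul]
    rw [Finset.sum_congr rfl hterm, Finset.sum_ite_eq' (Finset.range k) j,
      if_pos (Finset.mem_range.mpr hj)]
  have hπf : ∀ x, π (f x) = f (π x) := by
    intro x
    have hT1 : π (f x) = ∑ i ∈ Finset.range (k + 1), φ₀ ((f ^ (k - i)) x) • e i := by
      rw [hπapp, Finset.sum_range_succ]
      have hlast : φ₀ ((f ^ (k - k)) x) • e k = 0 := by
        rw [hek k le_rfl, smul_zero]
      rw [hlast, add_zero]
      apply Finset.sum_congr rfl
      intro i hi
      rw [Finset.mem_range] at hi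
      congr 1
      have h1 : (f ^ (k - 1 - i)) (f x) = (f ^ (k - i)) x := by
        rw [← Module.End.mul_apply, ← pow_succ]
        have h2 : k - 1 - i + 1 = k - i := by omega
        rw [h2]
      rw [h1]
    have hT2 : f (π x) = ∑ i ∈ Finset.range (k + 1), φ₀ ((f ^ (k - i)) x) • e i := by
      rw [hπapp, map_sum, Finset.sum_range_succ']
      have hzero : φ₀ ((f ^ (k - 0)) x) • e 0 = 0 := by
        have : (f ^ (k - 0)) x = 0 := by
          have : k - 0 = k := by omega
          rw [this]; exact hfk x
        rw [this, map_zero, zero_smul]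
      rw [hzero, add_zero]
      apply Finset.sum_congr rfl
      intro i hi
      rw [Finset.mem_range] at hi
      rw [LinearMap.map_smul, hfe]
      have h2 : k - 1 - i = k - (i + 1) := by omega
      rw [h2]
    rw [hT1, hT2]
  set W := Submodule.span ℝ (Set.range (fun i : Fin k => e (i : ℕ))) with hW
  have hπW : ∀ v ∈ W, π v = v := by
    intro v hv
    refine Submodule.span_induction (p := fun x _ => π x = x) ?_ ?_ ?_ ?_ hv
    · rintro x ⟨i, rfl⟩; exact hπe i i.isLt
    · exact map_zero π
    · intro x y _ _ hx hy; rw [map_add, hx, hy]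
    · intro a x _ hx; rw [LinearMap.map_smul, hx]
  have hrange : LinearMap.range π = W := by
    apply le_antisymm
    · rintro _ ⟨x, rfl⟩
      rw [hπapp]
      apply Submodule.sum_mem
      intro i hi
      rw [Finset.mem_range] at hi
      exact Submodule.smul_mem _ _ (Submodule.subset_span ⟨⟨i, hi⟩, rfl⟩)
    · rw [hW, Submodule.span_le]
      rintro _ ⟨i, rfl⟩
      exact ⟨e (i : ℕ), hπe i i.isLt⟩
  have hWrank : finrank ℝ W = k := by
    rw [hW, finrank_span_eq_card hchain, Fintype.card_fin]
  have hVrank : finrank ℝ (Fin (k + 2) → ℝ) = k + 2 := by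
    simp [Module.finrank_fintype_fun_eq_card]
  set U := LinearMap.ker π with hU
  have hU2 : finrank ℝ U = 2 := by
    have hrn := LinearMap.finrank_range_add_finrank_ker π
    rw [hrange, hWrank, hVrank] at hrn
    rw [hU]
    omega
  have hUf : ∀ u ∈ U, f u ∈ U := by
    intro u hu
    rw [hU, LinearMap.mem_ker] at hu ⊢
    rw [hπf, hu, map_zero]
  have hWU : ∀ v, v ∈ W → v ∈ U → v = 0 := by
    intro v hw hu
    rw [hU, LinearMap.mem_ker] at hu
    rw [← hπW v hw, hu]
  -- construct the tail pair
  obtain ⟨u₁, u₂, c, hu₁U, hu₂U, hfu₁, hfu₂, huLI⟩ :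
      ∃ (u₁ u₂ : V (k + 2)) (c : ℝ), u₁ ∈ U ∧ u₂ ∈ U ∧ f u₁ = c • u₂ ∧ f u₂ = 0 ∧
        LinearIndependent ℝ ![u₁, u₂] := by
    by_cases hfU : ∃ u ∈ U, f u ≠ 0
    · obtain ⟨u, huU, hfu⟩ := hfU
      have hins : ∀ i : ℕ, (f ^ i) u ∈ U := by
        intro i
        induction i with
        | zero => simpa using huU
        | succ n ih =>
          have : (f ^ (n + 1)) u = f ((f ^ n) u) := by
            rw [pow_succ', Module.End.mul_apply]
          rw [this]
          exact hUf _ ih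
      have hffu : (f ^ 2) u = 0 := by
        by_contra hff
        have hex : ∃ N, (f ^ N) u = 0 := ⟨k, hfk u⟩
        set N := Nat.find hex with hN
        have hNz : (f ^ N) u = 0 := Nat.find_spec hex
        have hNk : N ≤ k := Nat.find_le (hfk u)
        have hN3 : 3 ≤ N := by
          by_contra hN2
          push_neg at hN2
          apply hff
          have h2 : f ^ 2 = f ^ (2 - N) * f ^ N := by rw [← pow_add]; congr 1; omega
          rw [h2, Module.End.mul_apply, hNz, map_zero]
        have hmlt : (f ^ (N - 1)) u ≠ 0 := Nat.find_min hex (by omega)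
        have hstep2 : (f ^ (N - 1 + 1)) u = 0 := by
          rw [show N - 1 + 1 = N by omega]; exact hNz
        have hm := chainLI f u (N - 1) hmlt hstep2
        set uf : Fin (N - 1 + 1) → U := fun i => ⟨(f ^ (i : ℕ)) u, hins i⟩ with huf
        have hli : LinearIndependent ℝ uf := by
          apply LinearIndependent.of_comp U.subtype
          exact hm
        have hcard := hli.fintype_card_le_finrank
        rw [Fintype.card_fin, hU2] at hcard
        omega
      refine ⟨u, f u, 1, huU, hUf u huU, (one_smul ℝ (f u)).symm, ?_, ?_⟩
      · have : (f ^ 2) u = f (f u) := by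
          rw [pow_succ', pow_one, Module.End.mul_apply]
        rw [← this, hffu]
      · have hfam : ![u, f u] = fun i : Fin 2 => (f ^ (i : ℕ)) u := by
          funext i
          fin_cases i
          · simp
          · simp [pow_one]
        rw [hfam]
        exact chainLI f u 1 (by rwa [pow_one]) hffu
    · push_neg at hfU
      let bU := Module.finBasisOfFinrankEq ℝ U hU2
      refine ⟨(bU 0 : V (k + 2)), (bU 1 : V (k + 2)), 0, (bU 0).2, (bU 1).2,
        by rw [zero_smul]; exact hfU _ (bU 0).2, hfU _ (bU 1).2, ?_⟩
      have hli := (bU.linearIndependent).map' U.subtype (Submodule.ker_subtype U)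
      have hfam : ![(bU 0 : V (k + 2)), (bU 1 : V (k + 2))] = U.subtype ∘ bU := by
        funext i
        fin_cases i <;> rfl
      rw [hfam]
      exact hli
  have hffu1 : ∀ m : ℕ, 2 ≤ m → (f ^ m) u₁ = 0 := by
    have h2 : (f ^ 2) u₁ = 0 := by
      have : (f ^ 2) u₁ = f (f u₁) := by rw [pow_succ', pow_one, Module.End.mul_apply]
      rw [this, hfu₁, LinearMap.map_smul, hfu₂, smul_zero]
    intro m hm
    have hd : f ^ m = f ^ (m - 2) * f ^ 2 := by rw [← pow_add]; congr 1; omega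
    rw [hd, Module.End.mul_apply, h2, map_zero]
  have hfmu2 : ∀ m : ℕ, 1 ≤ m → (f ^ m) u₂ = 0 := by
    intro m hm
    have hd : f ^ m = f ^ (m - 1) * f ^ 1 := by rw [← pow_add]; congr 1; omega
    rw [hd, Module.End.mul_apply, pow_one, hfu₂, map_zero]
  -- assemble the basis
  have hspanU : Submodule.span ℝ (Set.range ![u₁, u₂]) ≤ U := by
    rw [Submodule.span_le]
    rintro _ ⟨i, rfl⟩
    fin_cases i
    · exact hu₁U
    · exact hu₂U
  have hdisj : Disjoint (Submodule.span ℝ (Set.range (fun i : Fin k => e (i : ℕ))))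
      (Submodule.span ℝ (Set.range ![u₁, u₂])) := by
    rw [Submodule.disjoint_def]
    intro x hxW hxS
    exact hWU x hxW (hspanU hxS)
  have hsum := hchain.sum_type huLI hdisj
  set G : Fin (k + 2) → V (k + 2) :=
    (Sum.elim (fun i : Fin k => e (i : ℕ)) ![u₁, u₂]) ∘ (finSumFinEquiv (m := k) (n := 2)).symm
    with hG
  have hGLI : LinearIndependent ℝ G := hsum.comp _ (Equiv.injective _)
  haveI : Nonempty (Fin (k + 2)) := ⟨⟨0, by omega⟩⟩
  have hcard2 : Fintype.card (Fin (k + 2)) = finrank ℝ (V (k + 2)) := by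
    simp [Module.finrank_fintype_fun_eq_card]
  obtain ⟨b, hb⟩ : ∃ b : Basis (Fin (k + 2)) ℝ (V (k + 2)), ∀ i, b i = G i :=
    ⟨basisOfLinearIndependentOfCardEqFinrank hGLI hcard2, fun i => by
      rw [coe_basisOfLinearIndependentOfCardEqFinrank]⟩
  have hGe : ∀ (i : Fin (k + 2)) (h : (i : ℕ) < k), G i = e (i : ℕ) := by
    intro i h
    have h1 : i = Fin.castAdd 2 ⟨(i : ℕ), h⟩ := Fin.ext (by simp)
    rw [hG, h1, Function.comp_apply, finSumFinEquiv_symm_apply_castAdd, Sum.elim_inl]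
    rfl
  have hGu1 : G ⟨k, by omega⟩ = u₁ := by
    have h1 : (⟨k, by omega⟩ : Fin (k + 2)) = Fin.natAdd k (0 : Fin 2) := Fin.ext (by simp)
    rw [hG, h1, Function.comp_apply, finSumFinEquiv_symm_apply_natAdd, Sum.elim_inr,
      Matrix.cons_val_zero]
  have hGu2 : G ⟨k + 1, by omega⟩ = u₂ := by
    have h1 : (⟨k + 1, by omega⟩ : Fin (k + 2)) = Fin.natAdd k (1 : Fin 2) := Fin.ext (by simp)
    rw [hG, h1, Function.comp_apply, finSumFinEquiv_symm_apply_natAdd, Sum.elim_inr,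
      Matrix.cons_val_one, Matrix.cons_val_zero]
  set φ := b.coord ⟨k - 1, by omega⟩ with hφd
  set ψ₁ := b.coord ⟨k, by omega⟩ with hψ₁d
  set ψ₂ := b.coord ⟨k + 1, by omega⟩ with hψ₂d
  have hco : ∀ (i j : Fin (k + 2)), b.coord i (b j) = if j = i then 1 else 0 := by
    intro i j
    rw [Basis.coord_apply, Basis.repr_self, Finsupp.single_apply]
  have hbe : ∀ (l : ℕ) (hl : l < k), b ⟨l, by omega⟩ = e l := by
    intro l hl
    rw [hb]
    exact hGe ⟨l, by omega⟩ (by simpa using hl)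
  have hbu1 : b ⟨k, by omega⟩ = u₁ := by rw [hb]; exact hGu1
  have hbu2 : b ⟨k + 1, by omega⟩ = u₂ := by rw [hb]; exact hGu2
  have hφe : ∀ l : ℕ, φ (e l) = if l = k - 1 then 1 else 0 := by
    intro l
    by_cases hl : l < k
    · rw [← hbe l hl, hφd, hco]
      by_cases h : l = k - 1
      · rw [if_pos (Fin.ext (by simpa using h)), if_pos h]
      · rw [if_neg (fun hc => h (by simpa using congrArg Fin.val hc)), if_neg h]
    · rw [hek l (by omega), map_zero, if_neg (by omega)]
  have hψ₁e : ∀ l : ℕ, ψ₁ (e l) = 0 := by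
    intro l
    by_cases hl : l < k
    · rw [← hbe l hl, hψ₁d, hco,
        if_neg (fun hc => by have := congrArg Fin.val hc; simp at this; omega)]
    · rw [hek l (by omega), map_zero]
  have hψ₂e : ∀ l : ℕ, ψ₂ (e l) = 0 := by
    intro l
    by_cases hl : l < k
    · rw [← hbe l hl, hψ₂d, hco,
        if_neg (fun hc => by have := congrArg Fin.val hc; simp at this; omega)]
    · rw [hek l (by omega), map_zero]
  have hψ₁u1 : ψ₁ u₁ = 1 := by rw [← hbu1, hψ₁d, hco, if_pos rfl]
  have hψ₁u2 : ψ₁ u₂ = 0 := by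
    rw [← hbu2, hψ₁d, hco,
      if_neg (fun hc => by have := congrArg Fin.val hc; simp at this)]
  have hψ₂u1 : ψ₂ u₁ = 0 := by
    rw [← hbu1, hψ₂d, hco,
      if_neg (fun hc => by have := congrArg Fin.val hc; simp at this)]
  have hψ₂u2 : ψ₂ u₂ = 1 := by rw [← hbu2, hψ₂d, hco, if_pos rfl]
  have hφu1 : ∀ m : ℕ, φ ((f ^ m) u₁) = 0 := by
    intro m
    match m with
    | 0 =>
      rw [pow_zero, Module.End.one_apply, ← hbu1, hφd, hco,
        if_neg (fun hc => by have := congrArg Fin.val hc; simp at this; omega)]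
    | 1 =>
      rw [pow_one, hfu₁, LinearMap.map_smul, smul_eq_mul, ← hbu2, hφd, hco,
        if_neg (fun hc => by have := congrArg Fin.val hc; simp at this; omega), mul_zero]
    | (m + 2) => rw [hffu1 (m + 2) (by omega), map_zero]
  have hφu2 : ∀ m : ℕ, φ ((f ^ m) u₂) = 0 := by
    intro m
    match m with
    | 0 =>
      rw [pow_zero, Module.End.one_apply, ← hbu2, hφd, hco,
        if_neg (fun hc => by have := congrArg Fin.val hc; simp at this; omega)]
    | (m + 1) => rw [hfmu2 (m + 1) (by omega), map_zero]
  have hψ₁f : ∀ x, ψ₁ (f x) = 0 := by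
    have hmap : ψ₁.comp f = 0 := by
      apply b.ext
      intro i
      rw [LinearMap.comp_apply, LinearMap.zero_apply]
      by_cases hik : (i : ℕ) < k
      · have h1 : b i = e (i : ℕ) := by rw [hb]; exact hGe i hik
        rw [h1, hfe, hψ₁e]
      · by_cases hik2 : (i : ℕ) = k
        · have h1 : i = ⟨k, by omega⟩ := Fin.ext hik2
          rw [h1, hbu1, hfu₁, LinearMap.map_smul, smul_eq_mul, hψ₁u2, mul_zero]
        · have h3 : (i : ℕ) = k + 1 := by have := i.isLt; omega
          have h1 : i = ⟨k + 1, by omega⟩ := Fin.ext h3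
          rw [h1, hbu2, hfu₂, map_zero]
    intro x
    have := LinearMap.congr_fun hmap x
    simpa using this
  have hψ₂f : ∀ x, ψ₂ (f x) = c * ψ₁ x := by
    have hmap : ψ₂.comp f = c • ψ₁ := by
      apply b.ext
      intro i
      rw [LinearMap.comp_apply, LinearMap.smul_apply, smul_eq_mul]
      by_cases hik : (i : ℕ) < k
      · have h1 : b i = e (i : ℕ) := by rw [hb]; exact hGe i hik
        rw [h1, hfe, hψ₂e, hψ₁e, mul_zero]
      · by_cases hik2 : (i : ℕ) = k
        · have h1 : i = ⟨k, by omega⟩ := Fin.ext hik2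
          rw [h1, hbu1, hfu₁, LinearMap.map_smul, smul_eq_mul, hψ₂u2, hψ₁u1, mul_one]
        · have h3 : (i : ℕ) = k + 1 := by have := i.isLt; omega
          have h1 : i = ⟨k + 1, by omega⟩ := Fin.ext h3
          rw [h1, hbu2, hfu₂, map_zero, hψ₁u2, mul_zero]
    intro x
    have := LinearMap.congr_fun hmap x
    simpa using this
  have hdl : ∀ m j : ℕ, dl f φ m (e j) = if m + j = k - 1 then 1 else 0 := by
    intro m j
    have h1 : dl f φ m (e j) = φ (e (m + j)) := by
      simp only [dl, LinearMap.comp_apply]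
      rw [hee]
    rw [h1, hφe]
  have hrep : ∀ (v : V (k + 2)) (m : ℕ) (hm : m < k),
      φ ((f ^ m) v) = b.repr v ⟨k - 1 - m, by omega⟩ := by
    intro v m hm
    conv_lhs => rw [← Basis.sum_repr b v]
    rw [map_sum, map_sum]
    have hterm : ∀ i : Fin (k + 2),
        φ ((f ^ m) (b.repr v i • b i))
          = b.repr v i * (if (i : ℕ) = k - 1 - m then 1 else 0) := by
      intro i
      rw [LinearMap.map_smul, LinearMap.map_smul, smul_eq_mul]
      congr 1
      by_cases hik : (i : ℕ) < k
      · have h1 : b i = e (i : ℕ) := by rw [hb]; exact hGe i hik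
        rw [h1, hee, hφe]
        by_cases h : (i : ℕ) = k - 1 - m
        · rw [if_pos (by omega), if_pos h]
        · rw [if_neg (by omega), if_neg h]
      · by_cases hik2 : (i : ℕ) = k
        · have h1 : i = ⟨k, by omega⟩ := Fin.ext hik2
          rw [h1, hbu1, hφu1, if_neg (by omega)]
        · have h3 : (i : ℕ) = k + 1 := by have := i.isLt; omega
          have h1 : i = ⟨k + 1, by omega⟩ := Fin.ext h3
          rw [h1, hbu2, hφu2, if_neg (by omega)]
    rw [Finset.sum_congr rfl (fun i _ => hterm i)]
    rw [Finset.sum_eq_single (⟨k - 1 - m, by omega⟩ : Fin (k + 2))]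
    · rw [if_pos rfl, mul_one]
    · intro i _ hne
      rw [if_neg (fun hc => hne (Fin.ext (by simpa using hc))), mul_zero]
    · intro h; exact absurd (Finset.mem_univ _) h
  apply engine hk5 hkodd A f hfA hfk φ ψ₁ ψ₂ c hψ₁f hψ₂f
  · intro j hj
    exact ⟨e j, fun m hm => hdl m j, hψ₁e j, hψ₂e j⟩
  · right
    exact ⟨u₁, u₂, fun m hm => hφu1 m, fun m hm => hφu2 m, hψ₁u1, hψ₂u1, hψ₁u2, hψ₂u2⟩
  · intro v hv h1 h2
    apply (Basis.ext_elem_iff b).mpr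
    intro i
    rw [map_zero, Finsupp.coe_zero, Pi.zero_apply]
    by_cases hik : (i : ℕ) < k
    · have hx : φ ((f ^ (k - 1 - (i : ℕ))) v) = 0 := hv (k - 1 - (i : ℕ)) (by omega)
      rw [hrep v (k - 1 - (i : ℕ)) (by omega)] at hx
      have h2' : (⟨k - 1 - (k - 1 - (i : ℕ)), by omega⟩ : Fin (k + 2)) = i :=
        Fin.ext (by simp; omega)
      rwa [h2'] at hx
    · by_cases hik2 : (i : ℕ) = k
      · have hi1 : i = ⟨k, by omega⟩ := Fin.ext hik2
        rw [hψ₁d, Basis.coord_apply] at h1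
        rw [hi1]
        exact h1
      · have h3 : (i : ℕ) = k + 1 := by have := i.isLt; omega
        have hi1 : i = ⟨k + 1, by omega⟩ := Fin.ext h3
        rw [hψ₂d, Basis.coord_apply] at h2
        rw [hi1]
        exact h2

end case2

/-- Let `k ≥ 5` be odd and `A ∈ M(2n-1,ℝ)` with
`A^k = 0 ≠ A^{k-1}` (so `𝔤_A` is `k`-step nilpotent). If `dim 𝔤_A = 2n ≤ k + 3`,
then `𝔤_A` admits a symplectic structure. -/
theorem stmt16 (n k : ℕ) (hk5 : 5 ≤ k) (hkodd : Odd k)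
    (A : Matrix (Fin (2 * n - 1)) (Fin (2 * n - 1)) ℝ)
    (hAk : A ^ k = 0) (hAk' : A ^ (k - 1) ≠ 0)
    (hdim : 2 * n ≤ k + 3) :
    HasSymplecticStructure A := by
  set f := Matrix.toLin' A with hf
  have hfk : ∀ x, (f ^ k) x = 0 := by
    intro x; rw [← toLin'_pow, hAk]; simp
  obtain ⟨v₀, hv₀⟩ : ∃ v, (f ^ (k - 1)) v ≠ 0 := by
    by_contra hc; push_neg at hc
    apply hAk'
    apply Matrix.toLin'.injective
    rw [map_zero]
    apply LinearMap.ext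
    intro v
    rw [toLin'_pow]
    simpa using hc v
  have hk1 : k - 1 + 1 = k := by omega
  have hstep : (f ^ (k - 1 + 1)) v₀ = 0 := by rw [hk1]; exact hfk v₀
  have hchain := chainLI f v₀ (k - 1) hv₀ hstep
  have hkd : k ≤ 2 * n - 1 := by
    have hcard := hchain.fintype_card_le_finrank
    rw [Fintype.card_fin] at hcard
    have hfr : finrank ℝ (V (2 * n - 1)) = 2 * n - 1 := by
      simp [Module.finrank_fintype_fun_eq_card]
    rw [hfr] at hcard
    omega
  obtain ⟨a, ha⟩ := hkodd
  have hn1 : 1 ≤ n := by omega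
  have hcases : 2 * n - 1 = k ∨ 2 * n - 1 = k + 2 := by omega
  rcases hcases with hd | hd
  · have h1 : A ^ (2 * n - 1) = 0 :=
      (congrArg (fun t => A ^ t) hd).trans hAk
    have h2 : A ^ (2 * n - 1 - 1) ≠ 0 := by
      have := congrArg (fun t => A ^ t) (show 2 * n - 1 - 1 = k - 1 by omega)
      rw [this]
      exact hAk'
    exact case1 (by omega) ⟨a, by omega⟩ A h1 h2
  · exact case2 hk5 ⟨a, ha⟩ hd A hAk hAk'
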